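/- Let p ≥ 5 and let V be a 2-dimensional 𝔽_p-vector space with a group action of G = GL₂(𝔽_p) (via the identity map). If the image of a representation ρ̄: G → GL₂(𝔽_p) contains a nontrivial element of order p (i.e., a nontrivial unipotent element) and ρ̄ is irreducible with det ρ̄ surjective onto 𝔽_p^×, then the image of ρ̄ contains SL₂(𝔽_p) and hence equals GL₂(𝔽_p). -/

import Mathlib

open Matrix

section helpers

variable {K : Type*} [Field K]

/-- elementary matrix `[[1,t],[0,1]]` as a unit -/
def Egen12 (t : K) : (Matrix (Fin 2) (Fin 2) K)ˣ :=
  ⟨!![1, t; 0, 1], !![1, -t; 0, 1],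
    by simp [Matrix.mul_fin_two, ← Matrix.one_fin_two],
    by simp [Matrix.mul_fin_two, ← Matrix.one_fin_two]⟩

/-- elementary matrix `[[1,0],[t,1]]` as a unit -/
def Egen21 (t : K) : (Matrix (Fin 2) (Fin 2) K)ˣ :=
  ⟨!![1, 0; t, 1], !![1, 0; -t, 1],
    by simp [Matrix.mul_fin_two, ← Matrix.one_fin_two],
    by simp [Matrix.mul_fin_two, ← Matrix.one_fin_two]⟩

lemma Egen12_mul (a b : K) : Egen12 a * Egen12 b = Egen12 (a + b) := by
  apply Units.ext
  simp [Egen12, Matrix.mul_fin_two, add_comm]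

lemma Egen21_mul (a b : K) : Egen21 a * Egen21 b = Egen21 (a + b) := by
  apply Units.ext
  simp [Egen21, Matrix.mul_fin_two, add_comm]

lemma Egen12_pow (a : K) (n : ℕ) : Egen12 a ^ n = Egen12 (n * a) := by
  induction n with
  | zero => apply Units.ext; simp [Egen12, ← Matrix.one_fin_two]
  | succ k ih => rw [pow_succ, ih, Egen12_mul]; push_cast; ring_nf
  
lemma Egen21_pow (a : K) (n : ℕ) : Egen21 a ^ n = Egen21 (n * a) := by
  induction n with
  | zero => apply Units.ext; simp [Egen21, ← Matrix.one_fin_two]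
  | succ k ih => rw [pow_succ, ih, Egen21_mul]; push_cast; ring_nf

/-- generation of SL2 by elementary matrices, case lower-left entry nonzero -/
lemma gen_aux (S : Subgroup (Matrix (Fin 2) (Fin 2) K)ˣ)
    (h12 : ∀ t, Egen12 t ∈ S) (h21 : ∀ t, Egen21 t ∈ S)
    (A : (Matrix (Fin 2) (Fin 2) K)ˣ)
    (hdet : Matrix.det (A : Matrix (Fin 2) (Fin 2) K) = 1)
    (hc : (A : Matrix (Fin 2) (Fin 2) K) 1 0 ≠ 0) : A ∈ S := by
  set a := (A : Matrix (Fin 2) (Fin 2) K) 0 0 with ha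
  set b := (A : Matrix (Fin 2) (Fin 2) K) 0 1 with hb
  set c := (A : Matrix (Fin 2) (Fin 2) K) 1 0 with hcc
  set d := (A : Matrix (Fin 2) (Fin 2) K) 1 1 with hd
  have hdet' : a * d - b * c = 1 := by
    rw [← hdet, Matrix.det_fin_two]
  have key : A = Egen12 ((a - 1) / c) * Egen21 c * Egen12 ((d - 1) / c) := by
    apply Units.ext
    push_cast [Egen12, Egen21, Units.val_mul]
    rw [Matrix.eta_fin_two (A : Matrix (Fin 2) (Fin 2) K)]
    rw [mul_fin_two, mul_fin_two]
    ext i j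
    fin_cases i <;> fin_cases j <;> simp only [Fin.zero_eta, Fin.mk_one, Matrix.of_apply, Matrix.cons_val', Matrix.cons_val_zero, Matrix.cons_val_one, Matrix.head_cons, Matrix.empty_val', Matrix.cons_val_fin_one]
    · show a = _
      field_simp
      ring
    · show b = _
      field_simp
      ring_nf
      linear_combination -hdet'
    · show c = _
      field_simp
      ring
    · show d = _
      field_simp
      ring
  rw [key]
  exact mul_mem (mul_mem (h12 _) (h21 _)) (h12 _)

/-- full generation lemma -/
lemma gen (S : Subgroup (Matrix (Fin 2) (Fin 2) K)ˣ)
    (h12 : ∀ t, Egen12 t ∈ S) (h21 : ∀ t, Egen21 t ∈ S)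
    (A : (Matrix (Fin 2) (Fin 2) K)ˣ)
    (hdet : Matrix.det (A : Matrix (Fin 2) (Fin 2) K) = 1) : A ∈ S := by
  by_cases hc : (A : Matrix (Fin 2) (Fin 2) K) 1 0 ≠ 0
  · exact gen_aux S h12 h21 A hdet hc
  · push_neg at hc
    set B := Egen21 1 * A with hB
    have hBval : (B : Matrix (Fin 2) (Fin 2) K) = !![1,0;1,1] * (A : Matrix (Fin 2) (Fin 2) K) := by
      simp [hB, Egen21]
    have hB10 : (B : Matrix (Fin 2) (Fin 2) K) 1 0 ≠ 0 := by
      rw [hBval, Matrix.eta_fin_two (A : Matrix (Fin 2) (Fin 2) K), mul_fin_two]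
      have : (A : Matrix (Fin 2) (Fin 2) K) 0 0 ≠ 0 := by
        intro h0
        rw [Matrix.det_fin_two, h0, hc] at hdet
        simp at hdet
      simpa [hc] using this
    have hBdet : Matrix.det (B : Matrix (Fin 2) (Fin 2) K) = 1 := by
      rw [hBval, Matrix.det_mul, hdet]
      norm_num [Matrix.det_fin_two]
    have hBmem : B ∈ S := gen_aux S h12 h21 B hBdet hB10
    have : A = (Egen21 1)⁻¹ * B := by rw [hB]; group
    rw [this]
    exact mul_mem (inv_mem (h21 1)) hBmem

/-- two vectors in K² killed by a nonzero matrix N have zero determinant -/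
lemma ker_forces {N : Matrix (Fin 2) (Fin 2) K} (hN : N ≠ 0) {u v : Fin 2 → K}
    (hu : N.mulVec u = 0) (hv : N.mulVec v = 0) : u 0 * v 1 - v 0 * u 1 = 0 := by
  by_contra hd
  set Q : Matrix (Fin 2) (Fin 2) K := !![u 0, v 0; u 1, v 1] with hQ
  have hQdet : Q.det ≠ 0 := by
    rw [Matrix.det_fin_two]; simpa [hQ] using hd
  have hQunit : IsUnit Q := by
    rw [Matrix.isUnit_iff_isUnit_det]
    exact hQdet.isUnit
  have hNQ : N * Q = 0 := by
    ext i j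
    have hu' := congrFun hu i
    have hv' := congrFun hv i
    simp [Matrix.mulVec, dotProduct, Fin.sum_univ_two] at hu' hv'
    fin_cases j <;>
      simp [Matrix.mul_apply, Fin.sum_univ_two, hQ] <;> [exact hu'; exact hv']
  obtain ⟨Qu, hQu⟩ := hQunit
  apply hN
  calc N = N * (↑Qu * ↑Qu⁻¹) := by rw [Units.mul_inv, mul_one]
    _ = (N * Q) * ↑Qu⁻¹ := by rw [hQu, mul_assoc]
    _ = 0 := by rw [hNQ, zero_mul]

/-- dependence: if det(u,v)=0 and u ≠ 0 then v is a multiple of u -/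
lemma vec_dep {u v : Fin 2 → K} (hu : u ≠ 0)
    (hd : u 0 * v 1 - v 0 * u 1 = 0) : ∃ cc : K, v = cc • u := by
  by_cases h0 : u 0 ≠ 0
  · refine ⟨v 0 / u 0, ?_⟩
    funext i
    fin_cases i
    · show v 0 = (v 0 / u 0) * u 0
      field_simp
    · show v 1 = (v 0 / u 0) * u 1
      field_simp
      linear_combination hd
  · push_neg at h0
    have h1 : u 1 ≠ 0 := by
      intro h1
      apply hu
      funext i; fin_cases i <;> simp [h0, h1]
    refine ⟨v 1 / u 1, ?_⟩
    funext i
    fin_cases i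
    · show v 0 = (v 1 / u 1) * u 0
      rw [h0] at hd ⊢
      rw [mul_zero]
      have hv0 : v 0 * u 1 = 0 := by linear_combination -hd
      exact (mul_eq_zero.mp hv0).resolve_right h1
    · show v 1 = (v 1 / u 1) * u 1
      field_simp

end helpers

/-- Let `p ≥ 5` be a prime.  If the image of a representation
`ρ̄ : G → GL₂(𝔽_p)` contains a nontrivial element of order `p` (a nontrivial
unipotent element), `ρ̄` is irreducible (no stable line, stated as: the only
stable submodules of `𝔽_p²` are `⊥` and `⊤`), and `det ρ̄` surjects onto
`𝔽_p^×`, then the image of `ρ̄` contains `SL₂(𝔽_p)` and hence equals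
`GL₂(𝔽_p)`. -/
theorem stmt_6 (p : ℕ) [Fact p.Prime] (hp : 5 ≤ p)
    (G : Type*) [Group G] (ρ : G →* GL (Fin 2) (ZMod p))
    (hunip : ∃ g : G, ρ g ≠ 1 ∧ orderOf (ρ g) = p)
    (hirr : ∀ W : Submodule (ZMod p) (Fin 2 → ZMod p),
      (∀ (g : G), ∀ v ∈ W, Matrix.mulVec ((ρ g : Matrix (Fin 2) (Fin 2) (ZMod p))) v ∈ W) →
      W = ⊥ ∨ W = ⊤)
    (hdet : ∀ x : ZMod p, x ≠ 0 →
      ∃ g : G, Matrix.det ((ρ g : Matrix (Fin 2) (Fin 2) (ZMod p))) = x) :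
    (∀ A : GL (Fin 2) (ZMod p),
        Matrix.det ((A : Matrix (Fin 2) (Fin 2) (ZMod p))) = 1 → A ∈ ρ.range) ∧
      ρ.range = ⊤ := by
  classical
  have hp1 : 1 ≤ p := le_trans (by norm_num) hp
  obtain ⟨g, hg1, hgord⟩ := hunip
  set u : (Matrix (Fin 2) (Fin 2) (ZMod p))ˣ := ρ g with hu
  set N : Matrix (Fin 2) (Fin 2) (ZMod p) := (u : Matrix (Fin 2) (Fin 2) (ZMod p)) - 1 with hNdef
  have huN : (u : Matrix (Fin 2) (Fin 2) (ZMod p)) = 1 + N := by rw [hNdef]; abel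
  have hNne : N ≠ 0 := by
    intro h
    apply hg1
    apply Units.ext
    rw [hNdef, sub_eq_zero] at h
    simpa using h
  -- u^p = 1 as matrices
  have hup : (u : Matrix (Fin 2) (Fin 2) (ZMod p)) ^ p = 1 := by
    have h1 : u ^ p = 1 := by
      have h0 := pow_orderOf_eq_one u
      rwa [hgord] at h0
    have h2 := congrArg (Units.val) h1
    simpa [Units.val_pow_eq_pow_val] using h2
  -- N^p = 0
  have hNp : N ^ p = 0 := by
    have h3 : ((1 : Matrix (Fin 2) (Fin 2) (ZMod p)) + N) ^ p = 1 ^ p + N ^ p :=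
      add_pow_char_of_commute _ (Commute.one_left N)
    rw [← huN, hup, one_pow] at h3
    have h4 := h3.symm
    rwa [add_eq_left] at h4
  -- det N = 0
  have hdetN : N.det = 0 := by
    have h5 : N.det ^ p = 0 := by
      rw [← Matrix.det_pow, hNp]
      simp
    exact pow_eq_zero_iff (by omega) |>.mp h5
  -- Cayley-Hamilton for 2x2
  have hCH : N * N = (N 0 0 + N 1 1) • N - N.det • 1 := by
    ext i j
    fin_cases i <;> fin_cases j <;>
      simp [Matrix.mul_apply, Fin.sum_univ_two, Matrix.det_fin_two, Matrix.one_apply] <;> ring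
  set t : ZMod p := N 0 0 + N 1 1 with ht
  have hCH' : N * N = t • N := by rw [hCH, hdetN]; simp
  -- trace is zero, hence N² = 0
  have hpowN : ∀ k : ℕ, N ^ (k + 1) = t ^ k • N := by
    intro k
    induction k with
    | zero => simp
    | succ k ih =>
      rw [pow_succ, ih, Matrix.smul_mul, hCH', smul_smul, pow_succ]
  have htzero : t = 0 := by
    by_contra htne
    have h1 : (0 : Matrix (Fin 2) (Fin 2) (ZMod p)) = t ^ (p - 1) • N := by
      rw [← hNp]
      have := hpowN (p - 1)
      rwa [Nat.sub_add_cancel hp1] at this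
    rcases smul_eq_zero.mp h1.symm with h2 | h2
    · exact htne (pow_eq_zero_iff (by omega) |>.mp h2)
    · exact hNne h2
  have hNN : N * N = 0 := by rw [hCH', htzero, zero_smul]
  -- find w with N w ≠ 0
  have hw : ∃ w : Fin 2 → ZMod p, N.mulVec w ≠ 0 := by
    by_contra hall
    push_neg at hall
    apply hNne
    ext i j
    have := congrFun (hall (Pi.single j 1)) i
    simpa [Matrix.mulVec_single] using this
  obtain ⟨w, hwne⟩ := hw
  set f1 : Fin 2 → ZMod p := N.mulVec w with hf1def
  have hf1ne : f1 ≠ 0 := hwne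
  have hNf1 : N.mulVec f1 = 0 := by
    rw [hf1def, Matrix.mulVec_mulVec, hNN, Matrix.zero_mulVec]
  -- irreducibility gives g₀ moving the line spanned by f1
  have hex : ∃ g₀ : G, ((ρ g₀ : Matrix (Fin 2) (Fin 2) (ZMod p)).mulVec f1) ∉
      Submodule.span (ZMod p) {f1} := by
    by_contra hall
    push_neg at hall
    have hstab : ∀ g' : G, ∀ v ∈ Submodule.span (ZMod p) {f1},
        Matrix.mulVec ((ρ g' : Matrix (Fin 2) (Fin 2) (ZMod p))) v ∈
          Submodule.span (ZMod p) {f1} := by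
      intro g' v hv
      obtain ⟨cc, rfl⟩ := Submodule.mem_span_singleton.mp hv
      rw [Matrix.mulVec_smul]
      exact Submodule.smul_mem _ _ (hall g')
    rcases hirr _ hstab with hbot | htop
    · apply hf1ne
      have hm : f1 ∈ Submodule.span (ZMod p) {f1} := Submodule.mem_span_singleton_self f1
      rw [hbot] at hm
      simpa using hm
    · have hwmem : w ∈ Submodule.span (ZMod p) {f1} := by rw [htop]; trivial
      obtain ⟨cc, hcc⟩ := Submodule.mem_span_singleton.mp hwmem
      apply hf1ne
      rw [hf1def, ← hcc, Matrix.mulVec_smul, hNf1, smul_zero]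
  obtain ⟨g₀, hg₀⟩ := hex
  set h : (Matrix (Fin 2) (Fin 2) (ZMod p))ˣ := ρ g₀ with hhdef
  set f1' : Fin 2 → ZMod p := (h : Matrix (Fin 2) (Fin 2) (ZMod p)).mulVec f1 with hf1'def
  -- f1, f1' independent
  have hdQ : f1 0 * f1' 1 - f1' 0 * f1 1 ≠ 0 := by
    intro hd
    obtain ⟨cc, hcc⟩ := vec_dep hf1ne hd
    apply hg₀
    rw [hcc]
    exact Submodule.smul_mem _ _ (Submodule.mem_span_singleton_self f1)
  have hf1'ne : f1' ≠ 0 := by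
    intro h0
    apply hf1ne
    have h2 : ((h⁻¹ : (Matrix (Fin 2) (Fin 2) (ZMod p))ˣ) :
        Matrix (Fin 2) (Fin 2) (ZMod p)).mulVec f1' = f1 := by
      rw [hf1'def, Matrix.mulVec_mulVec, Units.inv_mul, Matrix.one_mulVec]
    rw [← h2, h0, Matrix.mulVec_zero]
  -- conjugation helper
  have hconj : ∀ X Y : Matrix (Fin 2) (Fin 2) (ZMod p),
      ((h : Matrix (Fin 2) (Fin 2) (ZMod p)) * X * ((h⁻¹ : _ˣ) : Matrix (Fin 2) (Fin 2) (ZMod p)))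
        * ((h : Matrix (Fin 2) (Fin 2) (ZMod p)) * Y * ((h⁻¹ : _ˣ) : Matrix (Fin 2) (Fin 2) (ZMod p)))
      = (h : Matrix (Fin 2) (Fin 2) (ZMod p)) * (X * Y) *
          ((h⁻¹ : _ˣ) : Matrix (Fin 2) (Fin 2) (ZMod p)) := by
    intro X Y
    calc ((h : Matrix (Fin 2) (Fin 2) (ZMod p)) * X * ((h⁻¹ : _ˣ) : Matrix (Fin 2) (Fin 2) (ZMod p)))
        * ((h : Matrix (Fin 2) (Fin 2) (ZMod p)) * Y * ((h⁻¹ : _ˣ) : Matrix (Fin 2) (Fin 2) (ZMod p)))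
        = (h : Matrix (Fin 2) (Fin 2) (ZMod p)) * (X *
            ((((h⁻¹ : _ˣ) : Matrix (Fin 2) (Fin 2) (ZMod p)) * (h : Matrix (Fin 2) (Fin 2) (ZMod p)))
              * (Y * ((h⁻¹ : _ˣ) : Matrix (Fin 2) (Fin 2) (ZMod p))))) := by
          simp only [mul_assoc]
      _ = (h : Matrix (Fin 2) (Fin 2) (ZMod p)) * (X * Y) *
            ((h⁻¹ : _ˣ) : Matrix (Fin 2) (Fin 2) (ZMod p)) := by
          rw [Units.inv_mul, one_mul]
          simp only [mul_assoc]
  -- conjugated nilpotent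
  set N' : Matrix (Fin 2) (Fin 2) (ZMod p) :=
    (h : Matrix (Fin 2) (Fin 2) (ZMod p)) * N * ((h⁻¹ : _ˣ) : Matrix (Fin 2) (Fin 2) (ZMod p))
    with hN'def
  have hN'ne : N' ≠ 0 := by
    intro h0
    apply hNne
    have h2 : N = ((h⁻¹ : _ˣ) : Matrix (Fin 2) (Fin 2) (ZMod p)) * N' *
        (h : Matrix (Fin 2) (Fin 2) (ZMod p)) := by
      rw [hN'def, ← mul_assoc, ← mul_assoc, Units.inv_mul, one_mul, mul_assoc, Units.inv_mul,
        mul_one]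
    rw [h2, h0, mul_zero, zero_mul]
  have hN'f1' : N'.mulVec f1' = 0 := by
    rw [hN'def, hf1'def, Matrix.mulVec_mulVec, mul_assoc, Units.inv_mul, mul_one,
      ← Matrix.mulVec_mulVec, hNf1, Matrix.mulVec_zero]
  have hN'N' : N' * N' = 0 := by
    rw [hN'def, hconj, hNN, mul_zero, zero_mul]
  -- c : N f1' = c • f1, c ≠ 0
  have hNNf1' : N.mulVec (N.mulVec f1') = 0 := by
    rw [Matrix.mulVec_mulVec, hNN, Matrix.zero_mulVec]
  obtain ⟨c, hc⟩ := vec_dep hf1ne (ker_forces hNne hNf1 hNNf1')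
  have hcne : c ≠ 0 := by
    intro h0
    rw [h0, zero_smul] at hc
    exact hdQ (ker_forces hNne hNf1 hc)
  -- d' : N' f1 = d' • f1', d' ≠ 0
  have hN'N'f1 : N'.mulVec (N'.mulVec f1) = 0 := by
    rw [Matrix.mulVec_mulVec, hN'N', Matrix.zero_mulVec]
  obtain ⟨d', hd'⟩ := vec_dep hf1'ne (ker_forces hN'ne hN'f1' hN'N'f1)
  have hd'ne : d' ≠ 0 := by
    intro h0
    rw [h0, zero_smul] at hd'
    exact hdQ (ker_forces hN'ne hd' hN'f1')
  -- the base-change matrix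
  set Q : Matrix (Fin 2) (Fin 2) (ZMod p) := !![f1 0, f1' 0; f1 1, f1' 1] with hQdef
  have hQdet : Q.det ≠ 0 := by
    rw [hQdef, Matrix.det_fin_two]
    simpa using hdQ
  obtain ⟨Qu, hQu⟩ := (Matrix.isUnit_iff_isUnit_det Q).mpr hQdet.isUnit
  -- matrix identities
  have hNQ : N * Q = Q * !![0, c; 0, 0] := by
    have h10 := congrFun hNf1 0
    have h11 := congrFun hNf1 1
    have h20 := congrFun hc 0
    have h21 := congrFun hc 1
    simp [Matrix.mulVec, dotProduct, Fin.sum_univ_two] at h10 h11 h20 h21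
    ext i j
    fin_cases i <;> fin_cases j <;>
      simp [Matrix.mul_apply, Fin.sum_univ_two, hQdef] <;>
      first
        | linear_combination h10
        | linear_combination h11
        | linear_combination h20
        | linear_combination h21
  have hN'Q : N' * Q = Q * !![0, 0; d', 0] := by
    have h10 := congrFun hN'f1' 0
    have h11 := congrFun hN'f1' 1
    have h20 := congrFun hd' 0
    have h21 := congrFun hd' 1
    simp [Matrix.mulVec, dotProduct, Fin.sum_univ_two] at h10 h11 h20 h21
    ext i j
    fin_cases i <;> fin_cases j <;>
      simp [Matrix.mul_apply, Fin.sum_univ_two, hQdef] <;>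
      first
        | linear_combination h10
        | linear_combination h11
        | linear_combination h20
        | linear_combination h21
  -- u Q = Q E12 c  and  v Q = Q E21 d'
  have hE12mat : (Egen12 c : Matrix (Fin 2) (Fin 2) (ZMod p)) = 1 + !![0, c; 0, 0] := by
    show !![1, c; 0, 1] = _
    rw [Matrix.one_fin_two]
    ext i j
    fin_cases i <;> fin_cases j <;> simp
  have hE21mat : (Egen21 d' : Matrix (Fin 2) (Fin 2) (ZMod p)) = 1 + !![0, 0; d', 0] := by
    show !![1, 0; d', 1] = _
    rw [Matrix.one_fin_two]
    ext i j
    fin_cases i <;> fin_cases j <;> simp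
  have huQ : (u : Matrix (Fin 2) (Fin 2) (ZMod p)) * Q =
      Q * (Egen12 c : Matrix (Fin 2) (Fin 2) (ZMod p)) := by
    rw [huN, hE12mat, add_mul, one_mul, mul_add, mul_one, hNQ]
  set v : (Matrix (Fin 2) (Fin 2) (ZMod p))ˣ := h * u * h⁻¹ with hvdef
  have hvmat : (v : Matrix (Fin 2) (Fin 2) (ZMod p)) = 1 + N' := by
    rw [hN'def]
    show (h : Matrix (Fin 2) (Fin 2) (ZMod p)) * (u : Matrix (Fin 2) (Fin 2) (ZMod p)) *
        ((h⁻¹ : _ˣ) : Matrix (Fin 2) (Fin 2) (ZMod p)) = _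
    rw [huN, mul_add, add_mul, mul_one, Units.mul_inv]
  have hvQ : (v : Matrix (Fin 2) (Fin 2) (ZMod p)) * Q =
      Q * (Egen21 d' : Matrix (Fin 2) (Fin 2) (ZMod p)) := by
    rw [hvmat, hE21mat, add_mul, one_mul, mul_add, mul_one, hN'Q]
  -- group-level conjugation identities
  have hconjpow : ∀ (x : (Matrix (Fin 2) (Fin 2) (ZMod p))ˣ) (n : ℕ),
      (Qu * x * Qu⁻¹) ^ n = Qu * x ^ n * Qu⁻¹ := by
    intro x n
    rw [← MulAut.conj_apply Qu, ← map_pow, MulAut.conj_apply]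
  have huconj : Qu * Egen12 c * Qu⁻¹ = u := by
    rw [mul_inv_eq_iff_eq_mul]
    apply Units.ext
    rw [Units.val_mul, Units.val_mul, hQu]
    exact huQ.symm
  have hvconj : Qu * Egen21 d' * Qu⁻¹ = v := by
    rw [mul_inv_eq_iff_eq_mul]
    apply Units.ext
    rw [Units.val_mul, Units.val_mul, hQu]
    exact hvQ.symm
  -- memberships
  have humem : u ∈ ρ.range := ⟨g, rfl⟩
  have hhmem : h ∈ ρ.range := ⟨g₀, rfl⟩
  have hvmem : v ∈ ρ.range := mul_mem (mul_mem hhmem humem) (inv_mem hhmem)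
  have h12mem : ∀ s : ZMod p, Qu * Egen12 s * Qu⁻¹ ∈ ρ.range := by
    intro s
    set n : ℕ := (s * c⁻¹).val with hn
    have hpow : Egen12 c ^ n = Egen12 s := by
      rw [Egen12_pow]
      congr 1
      rw [hn, ZMod.natCast_zmod_val]
      field_simp
    have : Qu * Egen12 s * Qu⁻¹ = (Qu * Egen12 c * Qu⁻¹) ^ n := by
      rw [hconjpow, hpow]
    rw [this, huconj]
    exact pow_mem humem n
  have h21mem : ∀ s : ZMod p, Qu * Egen21 s * Qu⁻¹ ∈ ρ.range := by
    intro s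
    set n : ℕ := (s * d'⁻¹).val with hn
    have hpow : Egen21 d' ^ n = Egen21 s := by
      rw [Egen21_pow]
      congr 1
      rw [hn, ZMod.natCast_zmod_val]
      field_simp
    have : Qu * Egen21 s * Qu⁻¹ = (Qu * Egen21 d' * Qu⁻¹) ^ n := by
      rw [hconjpow, hpow]
    rw [this, hvconj]
    exact pow_mem hvmem n
  -- 1st conclusion : all determinant-one matrices are in the image
  have main : ∀ A : GL (Fin 2) (ZMod p),
      Matrix.det ((A : Matrix (Fin 2) (Fin 2) (ZMod p))) = 1 → A ∈ ρ.range := by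
    intro A hA
    set S : Subgroup (Matrix (Fin 2) (Fin 2) (ZMod p))ˣ :=
      Subgroup.comap ((MulAut.conj Qu).toMonoidHom) ρ.range with hS
    have h12S : ∀ s : ZMod p, Egen12 s ∈ S := by
      intro s
      show (MulAut.conj Qu) (Egen12 s) ∈ ρ.range
      simpa [MulAut.conj_apply] using h12mem s
    have h21S : ∀ s : ZMod p, Egen21 s ∈ S := by
      intro s
      show (MulAut.conj Qu) (Egen21 s) ∈ ρ.range
      simpa [MulAut.conj_apply] using h21mem s
    set B : (Matrix (Fin 2) (Fin 2) (ZMod p))ˣ := Qu⁻¹ * A * Qu with hB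
    have hQdet1 : ((Qu⁻¹ : (Matrix (Fin 2) (Fin 2) (ZMod p))ˣ) :
        Matrix (Fin 2) (Fin 2) (ZMod p)).det * Q.det = 1 := by
      rw [← hQu, ← Matrix.det_mul, ← Units.val_mul]
      simp
    have hBdet : Matrix.det ((B : Matrix (Fin 2) (Fin 2) (ZMod p))) = 1 := by
      rw [hB, Units.val_mul, Units.val_mul, Matrix.det_mul, Matrix.det_mul, hA, mul_one, hQu]
      exact hQdet1
    have hBS : B ∈ S := gen S h12S h21S B hBdet
    have : (MulAut.conj Qu) B ∈ ρ.range := hBS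
    have hback : (MulAut.conj Qu) B = A := by
      rw [MulAut.conj_apply, hB]
      group
    rwa [hback] at this
  refine ⟨main, ?_⟩
  -- 2nd conclusion : the image is everything
  ext A
  simp only [Subgroup.mem_top, iff_true]
  have hAdet : Matrix.det ((A : Matrix (Fin 2) (Fin 2) (ZMod p))) ≠ 0 := by
    intro h0
    have h1 : ((A : Matrix (Fin 2) (Fin 2) (ZMod p)) *
        ((A⁻¹ : GL (Fin 2) (ZMod p)) : Matrix (Fin 2) (Fin 2) (ZMod p))).det = 1 := by
      rw [← Units.val_mul]
      simp
    rw [Matrix.det_mul, h0, zero_mul] at h1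
    exact zero_ne_one h1
  obtain ⟨g1, hg1'⟩ := hdet _ hAdet
  have hBdet : Matrix.det (((A * (ρ g1)⁻¹ : GL (Fin 2) (ZMod p)) :
      Matrix (Fin 2) (Fin 2) (ZMod p))) = 1 := by
    rw [Units.val_mul, Matrix.det_mul]
    have h2 : Matrix.det ((ρ g1 : Matrix (Fin 2) (Fin 2) (ZMod p))) *
        Matrix.det ((((ρ g1)⁻¹ : GL (Fin 2) (ZMod p)) : Matrix (Fin 2) (Fin 2) (ZMod p))) = 1 := by
      rw [← Matrix.det_mul, ← Units.val_mul]
      simp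
    rw [hg1'] at h2
    exact h2
  have hmem := main _ hBdet
  have : (A * (ρ g1)⁻¹) * ρ g1 ∈ ρ.range := mul_mem hmem ⟨g1, rfl⟩
  simpa using this
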